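/- A set of nodes S in an imprecise terrain is an imprecise minimum if and only if (i) bar(S) := min_{s∈S} high(s) < min_{t∈N(S)} low(t), and (ii) no proper subset S' of S satisfies condition (i). -/

import Mathlib

open scoped Classical
open Set

/-- An imprecise terrain: a finite geometric graph with nodes in the plane,
each node carrying an elevation interval `[low v, high v]`. -/
structure ImpTerrain (V : Type) [Fintype V] [DecidableEq V] where
  pos : V → ℝ × ℝ
  posInj : Function.Injective pos
  adj : V → V → Prop
  adj_symm : ∀ u v, adj u v → adj v u
  adj_irrefl : ∀ v, ¬ adj v v
  low : V → ℝ
  high : V → ℝ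

namespace ImpTerrain

variable {V : Type} [Fintype V] [DecidableEq V]

/-- A realization assigns to each node an elevation within its interval. -/
def IsRealization (T : ImpTerrain V) (R : V → ℝ) : Prop :=
  ∀ v, T.low v ≤ R v ∧ R v ≤ T.high v

/-- Horizontal (plane) distance between two nodes. -/
noncomputable def hdist (T : ImpTerrain V) (u v : V) : ℝ := dist (T.pos u) (T.pos v)

/-- Slope (steepness of descent) of the edge from `p` to `q` in realization `R`. -/
noncomputable def slope (T : ImpTerrain V) (R : V → ℝ) (p q : V) : ℝ :=
  (R p - R q) / T.hdist p q

/-- `q` is a steepest-descent neighbor of `p` in `R`. -/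
def SDN (T : ImpTerrain V) (R : V → ℝ) (p q : V) : Prop :=
  T.adj p q ∧ 0 ≤ T.slope R p q ∧ ∀ r, T.adj p r → T.slope R p r ≤ T.slope R p q

/-- The neighborhood of a set of nodes. -/
def Nbhd (T : ImpTerrain V) (P : Set V) : Set V :=
  {s | s ∉ P ∧ ∃ t ∈ P, T.adj s t}

/-- `u` and `v` are connected by a path staying inside `P`. -/
def ConnIn (T : ImpTerrain V) (P : Set V) (u v : V) : Prop :=
  Relation.ReflTransGen (fun a b => T.adj a b ∧ a ∈ P ∧ b ∈ P) u v

/-- `P` is a local minimum in realization `R`: nonempty, connected, all nodes at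
the same elevation, strictly below its neighborhood. -/
def LocalMin (T : ImpTerrain V) (R : V → ℝ) (P : Set V) : Prop :=
  P.Nonempty ∧ (∀ u ∈ P, ∀ v ∈ P, T.ConnIn P u v) ∧
    (∀ u ∈ P, ∀ v ∈ P, R u = R v) ∧ (∀ u ∈ P, ∀ t ∈ T.Nbhd P, R u < R t)

def InLocalMin (T : ImpTerrain V) (R : V → ℝ) (p : V) : Prop :=
  ∃ P, T.LocalMin R P ∧ p ∈ P

/-- One step of discrete water flow. -/
def FlowStep (T : ImpTerrain V) (R : V → ℝ) (p q : V) : Prop :=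
  (∃ P, T.LocalMin R P ∧ p ∈ P ∧ q ∈ P ∧ T.adj p q) ∨
    (¬ T.InLocalMin R p ∧ T.SDN R p q)

/-- `p ⇝_R q` : water from `p` reaches `q` in realization `R`. -/
def FlowsTo (T : ImpTerrain V) (R : V → ℝ) : V → V → Prop :=
  Relation.ReflTransGen (T.FlowStep R)

/-- The (discrete) watershed of a set of nodes `Q` in realization `R`. -/
def WS (T : ImpTerrain V) (R : V → ℝ) (Q : Set V) : Set V :=
  {p | ∃ q ∈ Q, T.FlowsTo R p q}

/-- The potential watershed of `Q`. -/
def PoWS (T : ImpTerrain V) (Q : Set V) : Set V :=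
  {p | ∃ R, T.IsRealization R ∧ p ∈ T.WS R Q}

/-- A flow path: a simple path following steepest-descent edges that ends in,
and visits all nodes of, a local minimum. -/
def IsFlowPath (T : ImpTerrain V) (R : V → ℝ) (L : List V) : Prop :=
  L.Nodup ∧ L.Chain' (fun p q => T.SDN R p q) ∧
    ∃ P, T.LocalMin R P ∧ (∀ v ∈ P, v ∈ L) ∧ ∃ hne : L ≠ [], L.getLast hne ∈ P

/-- The `Q`-avoiding potential watershed of `S`: nodes having, in some
realization, a flow path to a node of `S` whose portion up to that node
avoids `Q`. -/
def AvWS (T : ImpTerrain V) (Q S : Set V) : Set V :=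
  {p | ∃ R, T.IsRealization R ∧ ∃ L, T.IsFlowPath R L ∧ ∃ s ∈ S,
    ∃ i j : Fin L.length, (i : ℕ) ≤ (j : ℕ) ∧ L.get i = p ∧ L.get j = s ∧
      ∀ k : Fin L.length, (i : ℕ) ≤ (k : ℕ) → (k : ℕ) ≤ (j : ℕ) → L.get k ∉ Q}

/-- The persistent watershed of `Q`. -/
def PsWS (T : ImpTerrain V) (Q : Set V) : Set V :=
  (T.AvWS Q (T.PoWS Q)ᶜ)ᶜ

/-- The core watershed of `Q`: nodes from which every induced flow path leads
to a node of `Q`. -/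
def CoWS (T : ImpTerrain V) (Q : Set V) : Set V :=
  {p | ∀ R, T.IsRealization R → ∀ L, T.IsFlowPath R L →
    ∀ i : Fin L.length, L.get i = p →
      ∃ q ∈ Q, ∃ j : Fin L.length, (i : ℕ) ≤ (j : ℕ) ∧ L.get j = q}

/-- Union of all node sets disjoint from `Q` that form a local minimum in some
realization. -/
def Vmin (T : ImpTerrain V) (Q : Set V) : Set V :=
  ⋃₀ {r | r ∩ Q = ∅ ∧ ∃ R, T.IsRealization R ∧ T.LocalMin R r}

/-- `S` contains a local minimum in every realization. -/
def AlwaysMin (T : ImpTerrain V) (S : Set V) : Prop :=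
  ∀ R, T.IsRealization R → ∃ P, T.LocalMin R P ∧ P ⊆ S

/-- An imprecise minimum: a minimal set containing a local minimum in every
realization. -/
def ImpreciseMin (T : ImpTerrain V) (S : Set V) : Prop :=
  T.AlwaysMin S ∧ ∀ S', S' ⊂ S → ¬ T.AlwaysMin S'

/-- A terrain is regular if every local minimum of the lowermost realization is
an imprecise minimum. -/
def Regular (T : ImpTerrain V) : Prop :=
  ∀ P, T.LocalMin T.low P → T.ImpreciseMin P

/-- A proxy of `S`: a node of `S` from which water can never reach a node
outside `S` in any realization. -/
def IsProxy (T : ImpTerrain V) (S : Set V) (p : V) : Prop :=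
  p ∈ S ∧ ∀ R, T.IsRealization R → ∀ q, q ∉ S → ¬ T.FlowsTo R p q

/-- `R'` is an `ε`-perturbation of `R`. -/
def Perturb (ε : ℝ) (R R' : V → ℝ) : Prop := ∀ v, |R' v - R v| ≤ ε

/-- `S` together with all `ε`-perturbations of its members (`S^ε`). -/
def Enlarge (S : Set (V → ℝ)) (ε : ℝ) : Set (V → ℝ) :=
  S ∪ {R' | ∃ R ∈ S, Perturb ε R R'}

/-- `Π(S)` : flow paths induced by realizations in `S`. -/
def FlowPathsOf (T : ImpTerrain V) (S : Set (V → ℝ)) : Set (List V) :=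
  {L | ∃ R ∈ S, T.IsFlowPath R L}

/-- A flow path is stable with respect to `S`. -/
def StableWrt (T : ImpTerrain V) (S : Set (V → ℝ)) (L : List V) : Prop :=
  ∃ ε > (0 : ℝ), ∃ R ∈ S, ∀ R', Perturb ε R R' → T.IsFlowPath R' L

/-- State of the sweep-plane minimum-removal algorithm. -/
structure SweepState (V : Type) where
  discovered : Set V
  final : V → Option ℝ
  proxies : Set V

def pendingS (st : SweepState V) (v : V) : Prop :=
  v ∈ st.discovered ∧ st.final v = none

/-- Pending component of `v`. -/
def pendComp (T : ImpTerrain V) (st : SweepState V) (v : V) : Set V :=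
  {u | Relation.ReflTransGen (fun a b => T.adj a b ∧ pendingS st a ∧ pendingS st b) v u}

/-- One step of the sweep algorithm, processing a `low` event `(v, false)` or a
`high` event `(v, true)`. -/
noncomputable def sweepStep (T : ImpTerrain V) (st : SweepState V) : V × Bool → SweepState V
  | (v, false) =>
    let st1 : SweepState V := ⟨insert v st.discovered, st.final, st.proxies⟩
    if ∃ u, T.adj v u ∧ (st.final u).isSome = true then
      ⟨st1.discovered,
        fun w => if w ∈ T.pendComp st1 v then some (T.low v) else st.final w,
        st.proxies⟩
    else st1
  | (v, true) =>
    if (st.final v).isSome = true then st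
    else
      ⟨st.discovered,
        fun w =>
          if w ∈ T.pendComp st v then some (sSup (T.low '' T.pendComp st v))
          else st.final w,
        insert v st.proxies⟩

noncomputable def sweepRun (T : ImpTerrain V) (evs : List (V × Bool)) : SweepState V :=
  evs.foldl T.sweepStep ⟨∅, fun _ => none, ∅⟩

/-- Elevation key of an event. -/
def eKey (T : ImpTerrain V) : V × Bool → ℝ
  | (v, false) => T.low v
  | (v, true) => T.high v

/-- A valid event list: all events, each once, sorted by elevation with low
events before high events at equal elevation. -/
def ValidEventList (T : ImpTerrain V) (evs : List (V × Bool)) : Prop :=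
  (∀ v : V, ∀ b : Bool, (v, b) ∈ evs) ∧ evs.Nodup ∧
    evs.Pairwise (fun e1 e2 =>
      T.eKey e1 < T.eKey e2 ∨ (T.eKey e1 = T.eKey e2 ∧ ¬(e1.2 = true ∧ e2.2 = false)))

/-- The realization `M` computed by the sweep algorithm. -/
noncomputable def sweepM (T : ImpTerrain V) (evs : List (V × Bool)) : V → ℝ :=
  fun v => ((T.sweepRun evs).final v).getD (T.high v)

end ImpTerrain

section Aux

namespace ImpTerrain

variable {V : Type} [Fintype V] [DecidableEq V]

/-- Condition (i) of the characterization. -/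
def AuxCond (T : ImpTerrain V) (S : Set V) : Prop :=
  ∃ s ∈ S, ∀ t ∈ T.Nbhd S, T.high s < T.low t

private lemma rtg_closed {r : V → V → Prop} {D : Set V} (h : ∀ a b, r a b → b ∈ D)
    {u v : V} (hu : u ∈ D) (huv : Relation.ReflTransGen r u v) : v ∈ D := by
  induction huv with
  | refl => exact hu
  | tail _ hr _ => exact h _ _ hr

/-- Lemma A: condition (i) implies `S` contains a local minimum in every realization. -/
lemma auxCond_alwaysMin (T : ImpTerrain V) (hle : ∀ v, T.low v ≤ T.high v) {S : Set V}
    (hc : T.AuxCond S) : T.AlwaysMin S := by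
  obtain ⟨s, hsS, hs⟩ := hc
  intro R hR
  set C : Set V := {x | Relation.ReflTransGen (fun a b => T.adj a b ∧ a ∈ S ∧ b ∈ S) s x}
    with hCdef
  have hsC : s ∈ C := Relation.ReflTransGen.refl
  have hCS : C ⊆ S := fun x hx => rtg_closed (fun a b h => h.2.2) hsS hx
  -- minimizer of R over C
  have hCfne : (Finset.univ.filter (fun x => x ∈ C)).Nonempty :=
    ⟨s, by simp [hsC]⟩
  obtain ⟨u, huf, humin⟩ := Finset.exists_min_image _ R hCfne
  have huC : u ∈ C := by simpa using huf
  have hminC : ∀ x ∈ C, R u ≤ R x := fun x hx => humin x (by simp [hx])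
  set c : ℝ := R u with hcdef
  set r : V → V → Prop :=
    fun a b => T.adj a b ∧ a ∈ C ∧ b ∈ C ∧ R a = c ∧ R b = c with hrdef
  set P : Set V := {x | Relation.ReflTransGen r u x} with hPdef
  have huP : u ∈ P := Relation.ReflTransGen.refl
  have hPC : P ⊆ C := fun x hx => rtg_closed (fun a b h => h.2.2.1) huC hx
  have hPS : P ⊆ S := fun x hx => hCS (hPC hx)
  have hval : ∀ x ∈ P, R x = c := by
    intro x hx
    induction hx with
    | refl => rfl
    | tail _ hr _ => exact hr.2.2.2.2
  have hconn : ∀ x ∈ P, Relation.ReflTransGen (fun a b => T.adj a b ∧ a ∈ P ∧ b ∈ P) u x := by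
    intro x hx
    induction hx with
    | refl => exact Relation.ReflTransGen.refl
    | tail hub hbx ih => exact ih.tail ⟨hbx.1, hub, hub.tail hbx⟩
  have hsymm : Symmetric (fun a b => T.adj a b ∧ a ∈ P ∧ b ∈ P) :=
    fun a b h => ⟨T.adj_symm a b h.1, h.2.2, h.2.1⟩
  refine ⟨P, ⟨⟨u, huP⟩, ?_, ?_, ?_⟩, hPS⟩
  · intro a ha b hb
    exact ((@Relation.ReflTransGen.stdSymm _ _ ⟨hsymm⟩).symm _ _ (hconn a ha)).trans (hconn b hb)
  · intro a ha b hb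
    rw [hval a ha, hval b hb]
  · intro a ha t ht
    obtain ⟨htP, w, hwP, hadj⟩ := ht
    rw [hval a ha]
    by_cases htC : t ∈ C
    · rcases lt_or_eq_of_le (hminC t htC) with h | h
      · exact h
      · exact absurd (hwP.tail ⟨T.adj_symm t w hadj, hPC hwP, htC, hval w hwP, h.symm⟩) htP
    · have htS : t ∉ S := by
        intro htS
        exact htC ((hPC hwP).tail ⟨T.adj_symm t w hadj, hCS (hPC hwP), htS⟩)
      have htN : t ∈ T.Nbhd S := ⟨htS, w, hPS hwP, hadj⟩
      calc c ≤ R s := hminC s hsC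
        _ ≤ T.high s := (hR s).2
        _ < T.low t := hs t htN
        _ ≤ R t := (hR t).1

/-- The escape relation at level `c`. -/
def AuxRel (T : ImpTerrain V) (S : Set V) (c : ℝ) (a b : V) : Prop :=
  T.adj a b ∧ a ∈ S ∧ b ∈ S ∧ T.low a ≤ c ∧ T.low b ≤ c

/-- `v` can escape `S` at level `c`. -/
def AuxEsc (T : ImpTerrain V) (S : Set V) (c : ℝ) (v : V) : Prop :=
  v ∈ S ∧ T.low v ≤ c ∧ ∃ w, Relation.ReflTransGen (T.AuxRel S c) v w ∧
    ∃ t, t ∉ S ∧ T.adj w t ∧ T.low t ≤ c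

lemma auxEsc_mono (T : ImpTerrain V) {S : Set V} {c c' : ℝ} (hcc : c ≤ c') {v : V}
    (h : T.AuxEsc S c v) : T.AuxEsc S c' v := by
  obtain ⟨h1, h2, w, hw, t, ht1, ht2, ht3⟩ := h
  exact ⟨h1, h2.trans hcc,
    w, Relation.ReflTransGen.mono (fun a b h => ⟨h.1, h.2.1, h.2.2.1, h.2.2.2.1.trans hcc, h.2.2.2.2.trans hcc⟩) _ _ hw,
    t, ht1, ht2, ht3.trans hcc⟩

lemma auxEsc_attained (T : ImpTerrain V) {S : Set V} {c : ℝ} {v : V}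
    (h : T.AuxEsc S c v) : ∃ x : V, T.low x ≤ c ∧ T.AuxEsc S (T.low x) v := by
  obtain ⟨hvS, hvc, w, hw, t, ht1, ht2, ht3⟩ := h
  suffices H : ∀ a : V, Relation.ReflTransGen (T.AuxRel S c) a w → a ∈ S → T.low a ≤ c →
      ∃ x : V, T.low x ≤ c ∧ T.AuxEsc S (T.low x) a from H v hw hvS hvc
  intro a hw
  induction hw using Relation.ReflTransGen.head_induction_on with
  | refl =>
    intro hwS hwc
    rcases le_total (T.low w) (T.low t) with hh | hh
    · exact ⟨t, ht3, hwS, hh, w, Relation.ReflTransGen.refl, t, ht1, ht2, le_refl _⟩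
    · exact ⟨w, hwc, hwS, le_refl _, w, Relation.ReflTransGen.refl, t, ht1, ht2, hh⟩
  | head hab hbw ih =>
    intro haS hac
    obtain ⟨x', hx'c, hx'⟩ := ih hab.2.2.1 hab.2.2.2.2
    obtain ⟨hbS, hbx', w', hw', t', ht'1, ht'2, ht'3⟩ := hx'
    rcases le_total (T.low _) (T.low x') with hh | hh
    · refine ⟨x', hx'c, haS, hh, w', Relation.ReflTransGen.head
        ⟨hab.1, haS, hbS, hh, hbx'⟩ hw', t', ht'1, ht'2, ht'3⟩
    · refine ⟨_, hac, haS, le_refl _, w', Relation.ReflTransGen.head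
        ⟨hab.1, haS, hbS, le_refl _, hbx'.trans hh⟩
        (Relation.ReflTransGen.mono (fun p q h => ⟨h.1, h.2.1, h.2.2.1, h.2.2.2.1.trans hh, h.2.2.2.2.trans hh⟩) _ _ hw'),
        t', ht'1, ht'2, ht'3.trans hh⟩

lemma auxEsc_exists (T : ImpTerrain V) {S : Set V}
    (hnc : ∀ S', S' ⊆ S → ¬ T.AuxCond S') {v : V} (hv : v ∈ S) :
    ∃ c, T.AuxEsc S c v := by
  set C : Set V := {x | Relation.ReflTransGen (fun a b => T.adj a b ∧ a ∈ S ∧ b ∈ S) v x}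
    with hC
  have hvC : v ∈ C := Relation.ReflTransGen.refl
  have hCS : C ⊆ S := fun x hx => rtg_closed (fun a b h => h.2.2) hv hx
  have hnot := hnc C hCS
  rw [AuxCond] at hnot; push_neg at hnot
  obtain ⟨t, htN, -⟩ := hnot v hvC
  obtain ⟨htC, w, hwC, hadj⟩ := htN
  have htS : t ∉ S := fun htS => htC (hwC.tail ⟨T.adj_symm t w hadj, hCS hwC, htS⟩)
  set c := Finset.univ.sup' ⟨v, Finset.mem_univ v⟩ T.low with hc
  have hall : ∀ x, T.low x ≤ c := fun x => Finset.le_sup' T.low (Finset.mem_univ x)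
  exact ⟨c, hv, hall v, w, Relation.ReflTransGen.mono (fun a b h => ⟨h.1, h.2.1, h.2.2, hall a, hall b⟩) _ _ hwC,
    t, htS, T.adj_symm t w hadj, hall t⟩

lemma auxEsc_sInf (T : ImpTerrain V) {S : Set V} {u : V}
    (hne : {c | T.AuxEsc S c u}.Nonempty) :
    T.AuxEsc S (sInf {c | T.AuxEsc S c u}) u := by
  obtain ⟨c0, hc0⟩ := hne
  have hbdd : BddBelow {c | T.AuxEsc S c u} := ⟨T.low u, fun c hc => hc.2.1⟩
  set Bf : Finset V := Finset.univ.filter (fun x => T.AuxEsc S (T.low x) u) with hBf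
  obtain ⟨x0, hx0c, hx0⟩ := T.auxEsc_attained hc0
  have hBfne : Bf.Nonempty := ⟨x0, by simp [hBf, hx0]⟩
  obtain ⟨y, hyBf, hymin⟩ := Finset.exists_min_image Bf T.low hBfne
  have hy : T.AuxEsc S (T.low y) u := by
    have := hyBf
    simp only [hBf, Finset.mem_filter, Finset.mem_univ, true_and] at this
    exact this
  have heq : T.low y = sInf {c | T.AuxEsc S c u} := by
    refine le_antisymm (le_csInf ⟨c0, hc0⟩ ?_) (csInf_le hbdd hy)
    intro c hc
    obtain ⟨x, hxc, hx⟩ := T.auxEsc_attained hc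
    exact (hymin x (by simp [hBf, hx])).trans hxc
  rwa [heq] at hy

/-- Lemma B: if `S` contains a local minimum in every realization, some subset of `S`
satisfies condition (i). -/
lemma alwaysMin_auxCond (T : ImpTerrain V) (hle : ∀ v, T.low v ≤ T.high v) {S : Set V}
    (h : T.AlwaysMin S) : ∃ S', S' ⊆ S ∧ T.AuxCond S' := by
  by_contra hcon
  push_neg at hcon
  set R : V → ℝ := fun x => if x ∈ S then
      max (T.low x) (min (T.high x) (sInf {c | T.AuxEsc S c x})) else T.low x with hRdef
  have hReal : T.IsRealization R := by
    intro x
    by_cases hx : x ∈ S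
    · simp only [hRdef, hx, if_true]
      exact ⟨le_max_left _ _, max_le (hle x) (min_le_left _ _)⟩
    · simp only [hRdef, hx, if_false]
      exact ⟨le_refl _, hle x⟩
  obtain ⟨P, hP, hPS⟩ := h R hReal
  obtain ⟨⟨u0, hu0⟩, hconn, heq, hnb⟩ := hP
  set c : ℝ := R u0 with hcdef
  have hval : ∀ x ∈ P, R x = c := fun x hx => heq x hx u0 hu0
  have hlowc : ∀ x ∈ P, T.low x ≤ c := fun x hx => (hval x hx) ▸ (hReal x).1
  by_cases hca : ∃ x ∈ P, T.AuxEsc S c x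
  · obtain ⟨x, hxP, hxS, hxc, w, hw, t, ht1, ht2, ht3⟩ := hca
    suffices H : ∀ a : V, Relation.ReflTransGen (T.AuxRel S c) a w → a ∈ P → False from
      H x hw hxP
    intro a hw
    induction hw using Relation.ReflTransGen.head_induction_on with
    | refl =>
      intro hwP
      have htP : t ∉ P := fun htP => ht1 (hPS htP)
      have hlt := hnb w hwP t ⟨htP, w, hwP, T.adj_symm w t ht2⟩
      rw [hval w hwP] at hlt
      have hlt2 : c < T.low t := by simpa [hRdef, ht1] using hlt
      exact absurd ht3 (not_le.mpr hlt2)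
    | @head a b hab hbw ih =>
      intro haP
      by_cases hbP : b ∈ P
      · exact ih hbP
      · have hbN : b ∈ T.Nbhd P := ⟨hbP, a, haP, T.adj_symm a b hab.1⟩
        have hlt := hnb a haP b hbN
        rw [hval a haP] at hlt
        have hbesc : T.AuxEsc S c b := ⟨hab.2.2.1, hab.2.2.2.2, w, hbw, t, ht1, ht2, ht3⟩
        have hbdd : BddBelow {c' | T.AuxEsc S c' b} := ⟨T.low b, fun c' hc' => hc'.2.1⟩
        have h1 : sInf {c' | T.AuxEsc S c' b} ≤ c := csInf_le hbdd hbesc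
        have h2 : R b ≤ c := by
          simp only [hRdef, hab.2.2.1, if_true]
          exact max_le hab.2.2.2.2 ((min_le_right _ _).trans h1)
        exact absurd hlt (not_lt.mpr h2)
  · push_neg at hca
    have hhigh : ∀ x ∈ P, T.high x = c := by
      intro x hx
      have hxS := hPS hx
      have hne : {c' | T.AuxEsc S c' x}.Nonempty := T.auxEsc_exists hcon hxS
      have hsi : c < sInf {c' | T.AuxEsc S c' x} := by
        by_contra hsi
        push_neg at hsi
        exact hca x hx (T.auxEsc_mono hsi (T.auxEsc_sInf hne))
      have hRx : R x = c := hval x hx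
      have h1 : c ≤ T.high x := hRx ▸ (hReal x).2
      have h2 : T.high x ≤ c := by
        by_contra hcon2
        push_neg at hcon2
        have hlt : c < min (T.high x) (sInf {c' | T.AuxEsc S c' x}) := lt_min hcon2 hsi
        have hlt2 : c < R x := by
          simp only [hRdef, hxS, if_true]
          exact lt_of_lt_of_le hlt (le_max_right _ _)
        rw [hRx] at hlt2
        exact lt_irrefl c hlt2
      exact le_antisymm h2 h1
    set D : Set V := {x | x ∈ S ∧ T.low x ≤ c ∧ ¬ T.AuxEsc S c x} with hD
    have hPD : P ⊆ D := fun x hx => ⟨hPS hx, hlowc x hx, hca x hx⟩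
    set S' : Set V :=
      {x | Relation.ReflTransGen (fun a b => T.adj a b ∧ a ∈ D ∧ b ∈ D) u0 x} with hS'
    have hu0S' : u0 ∈ S' := Relation.ReflTransGen.refl
    have hS'D : S' ⊆ D := fun x hx => rtg_closed (fun a b h => h.2.2) (hPD hu0) hx
    have hS'S : S' ⊆ S := fun x hx => (hS'D hx).1
    refine hcon S' hS'S ⟨u0, hu0S', ?_⟩
    intro t ht
    obtain ⟨htS', w, hwS', hadj⟩ := ht
    rw [hhigh u0 hu0]
    by_contra hlt
    push_neg at hlt
    have hwD := hS'D hwS'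
    by_cases htS : t ∈ S
    · have htD : t ∉ D := fun htD => htS' (hwS'.tail ⟨T.adj_symm t w hadj, hwD, htD⟩)
      have htesc : T.AuxEsc S c t := by
        by_contra hne
        exact htD ⟨htS, hlt, hne⟩
      obtain ⟨-, -, w', hw', t', ht'⟩ := htesc
      exact hwD.2.2 ⟨hwD.1, hwD.2.1,
        w', Relation.ReflTransGen.head ⟨T.adj_symm t w hadj, hwD.1, htS, hwD.2.1, hlt⟩ hw',
        t', ht'⟩
    · exact hwD.2.2 ⟨hwD.1, hwD.2.1, w, Relation.ReflTransGen.refl,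
        t, htS, T.adj_symm t w hadj, hlt⟩

end ImpTerrain
end Aux

/-- Characterization of imprecise minima: `S` is an imprecise minimum iff
(i) `bar(S) = min_{s∈S} high s < min_{t∈N(S)} low t` and (ii) no proper subset
of `S` satisfies (i). -/
theorem stmt2 {V : Type} [Fintype V] [DecidableEq V] (T : ImpTerrain V)
    (hle : ∀ v, T.low v ≤ T.high v) (S : Set V) :
    T.ImpreciseMin S ↔
      ((∃ s ∈ S, ∀ t ∈ T.Nbhd S, T.high s < T.low t) ∧
        ∀ S', S' ⊂ S → ¬ ∃ s ∈ S', ∀ t ∈ T.Nbhd S', T.high s < T.low t) := by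
  constructor
  · rintro ⟨hAM, hmin⟩
    obtain ⟨S'', hsub, hcond⟩ := T.alwaysMin_auxCond hle hAM
    have hSS : S'' = S := by
      by_contra hne
      exact hmin S'' (ssubset_iff_subset_ne.mpr ⟨hsub, hne⟩)
        (T.auxCond_alwaysMin hle hcond)
    constructor
    · rw [← hSS]; exact hcond
    · intro S' hS' hc
      exact hmin S' hS' (T.auxCond_alwaysMin hle hc)
  · rintro ⟨hc, hmin⟩
    refine ⟨T.auxCond_alwaysMin hle hc, ?_⟩
    intro S' hS' hAM
    obtain ⟨S'', hsub, hcond⟩ := T.alwaysMin_auxCond hle hAM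
    exact hmin S'' (ssubset_of_subset_of_ssubset hsub hS') hcond
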